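/- Let A be an n×m real matrix, b ∈ ℝ^n, p ∈ [1,∞), Z = min_{x∈ℝ^m} ‖Ax − b‖_p with minimizer x_opt, and 0 < ε ≤ 1/7. Let T be a real matrix with n columns such that (1−ε)·‖Ax‖_p ≤ ‖TAx‖_p ≤ (1+ε)·‖Ax‖_p for all x ∈ ℝ^m, and suppose ‖T(Ax_opt − b)‖_p ≤ (1+ε)Z. Let x̂_c ∈ ℝ^m satisfy ‖Ax̂_c − b‖_p ≤ 8Z, and let x̂_opt ∈ ℝ^m satisfy ‖T(Ax̂_opt − b)‖_p ≤ ‖T(Ax_opt − b)‖_p. Then ‖Ax̂_opt − Ax̂_c‖_p ≤ 12Z. -/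

import Mathlib

open scoped BigOperators

/-- The entrywise `p`-norm of a vector: `(∑ i, |v i| ^ p) ^ (1/p)`. -/
noncomputable def pnorm (p : ℝ) {n : ℕ} (v : Fin n → ℝ) : ℝ :=
  (∑ i, |v i| ^ p) ^ (1 / p)

/-- The dual norm of the `p`-norm: the max-norm if `p = 1`, else the `p/(p-1)`-norm. -/
noncomputable def qnorm (p : ℝ) {n : ℕ} (v : Fin n → ℝ) : ℝ :=
  if p = 1 then ⨆ i, |v i| else pnorm (p / (p - 1)) v

/-- The entrywise `p`-norm of a matrix. -/
noncomputable def mpnorm (p : ℝ) {n d : ℕ} (M : Matrix (Fin n) (Fin d) ℝ) : ℝ :=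
  (∑ i, ∑ j, |M i j| ^ p) ^ (1 / p)

/-- `U` is an `(α, β, p)`-well-conditioned basis for the column space of `A`. -/
def IsWCB (p α β : ℝ) {n m d : ℕ} (A : Matrix (Fin n) (Fin m) ℝ)
    (U : Matrix (Fin n) (Fin d) ℝ) : Prop :=
  LinearMap.range U.mulVecLin = LinearMap.range A.mulVecLin ∧
  mpnorm p U ≤ α ∧
  ∀ z : Fin d → ℝ, qnorm p z ≤ β * pnorm p (U.mulVec z)

/-- `S : Ω → Matrix` is a random `n × n` diagonal sampling matrix with probabilities `pr`:
its diagonal entries are mutually independent, with `S ω i i = (pr i) ^ (-1/p)` with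
probability `pr i` and `S ω i i = 0` with probability `1 - pr i`. -/
structure IsSamplingMatrix {Ω : Type} [MeasurableSpace Ω] (μ : MeasureTheory.Measure Ω)
    (p : ℝ) {n : ℕ} (pr : Fin n → ℝ) (S : Ω → Matrix (Fin n) (Fin n) ℝ) : Prop where
  offdiag : ∀ ω i j, i ≠ j → S ω i j = 0
  meas : ∀ i, Measurable fun ω => S ω i i
  prob_val : ∀ i, μ {ω | S ω i i = (pr i) ^ (-(1 / p))} = ENNReal.ofReal (pr i)
  prob_zero : ∀ i, μ {ω | S ω i i = 0} = ENNReal.ofReal (1 - pr i)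
  indep : ProbabilityTheory.iIndepFun (fun i ω => S ω i i) μ


lemma pnorm_nonneg (p : ℝ) {n : ℕ} (v : Fin n → ℝ) : 0 ≤ pnorm p v :=
  Real.rpow_nonneg (Finset.sum_nonneg fun i _ => Real.rpow_nonneg (abs_nonneg _) _) _

lemma pnorm_add_le (p : ℝ) (hp : 1 ≤ p) {n : ℕ} (u v : Fin n → ℝ) :
    pnorm p (u + v) ≤ pnorm p u + pnorm p v := by
  simpa [pnorm] using Real.Lp_add_le Finset.univ u v hp

lemma pnorm_neg (p : ℝ) {n : ℕ} (v : Fin n → ℝ) : pnorm p (-v) = pnorm p v := by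
  simp [pnorm]

/-- **Lemma 4: the second-stage optimum stays in a ball of radius `12 Z` around `A x̂_c`.**
If `T` preserves `p`-norms of `A x` up to `1 ± ε`, `‖T (A x_opt - b)‖_p ≤ (1 + ε) Z`,
`‖A x̂_c - b‖_p ≤ 8 Z`, and `‖T (A x̂_opt - b)‖_p ≤ ‖T (A x_opt - b)‖_p`, then
`‖A x̂_opt - A x̂_c‖_p ≤ 12 Z`. -/
theorem second_stage_opt_in_ball {n m k : ℕ} (A : Matrix (Fin n) (Fin m) ℝ)
    (b : Fin n → ℝ) (T : Matrix (Fin k) (Fin n) ℝ) (p ε Z : ℝ)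
    (xopt xc xhopt : Fin m → ℝ)
    (hp : 1 ≤ p) (hε : 0 < ε) (hε' : ε ≤ 1 / 7)
    (hZ : Z = pnorm p (A.mulVec xopt - b))
    (hopt : ∀ x : Fin m → ℝ, Z ≤ pnorm p (A.mulVec x - b))
    (hT : ∀ x : Fin m → ℝ,
      (1 - ε) * pnorm p (A.mulVec x) ≤ pnorm p (T.mulVec (A.mulVec x)) ∧
      pnorm p (T.mulVec (A.mulVec x)) ≤ (1 + ε) * pnorm p (A.mulVec x))
    (hTopt : pnorm p (T.mulVec (A.mulVec xopt - b)) ≤ (1 + ε) * Z)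
    (hxc : pnorm p (A.mulVec xc - b) ≤ 8 * Z)
    (hxhopt : pnorm p (T.mulVec (A.mulVec xhopt - b))
      ≤ pnorm p (T.mulVec (A.mulVec xopt - b))) :
    pnorm p (A.mulVec xhopt - A.mulVec xc) ≤ 12 * Z := by
  have hZ0 : 0 ≤ Z := hZ ▸ pnorm_nonneg p _
  -- Step 1: bound ‖T A (xhopt - xopt)‖
  have e1 : T.mulVec (A.mulVec (xhopt - xopt))
      = T.mulVec (A.mulVec xhopt - b) + -(T.mulVec (A.mulVec xopt - b)) := by
    simp [Matrix.mulVec_sub, Matrix.mulVec_add]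
  have h1 : pnorm p (T.mulVec (A.mulVec (xhopt - xopt))) ≤ 2 * (1 + ε) * Z := by
    rw [e1]
    calc pnorm p (T.mulVec (A.mulVec xhopt - b) + -(T.mulVec (A.mulVec xopt - b)))
        ≤ pnorm p (T.mulVec (A.mulVec xhopt - b))
          + pnorm p (-(T.mulVec (A.mulVec xopt - b))) := pnorm_add_le p hp _ _
      _ = pnorm p (T.mulVec (A.mulVec xhopt - b))
          + pnorm p (T.mulVec (A.mulVec xopt - b)) := by rw [pnorm_neg]
      _ ≤ (1 + ε) * Z + (1 + ε) * Z := add_le_add (hxhopt.trans hTopt) hTopt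
      _ = 2 * (1 + ε) * Z := by ring
  have h2 : pnorm p (A.mulVec (xhopt - xopt)) ≤ 3 * Z := by
    have hlow := (hT (xhopt - xopt)).1
    have hεlt : (0:ℝ) < 1 - ε := by linarith
    have := hlow.trans h1
    -- (1-ε) * x ≤ 2(1+ε)Z, with 1-ε ≥ 6/7, 1+ε ≤ 8/7
    nlinarith [pnorm_nonneg p (A.mulVec (xhopt - xopt))]
  have e2 : A.mulVec xhopt - A.mulVec xc
      = A.mulVec (xhopt - xopt) + (A.mulVec xopt - b) + -(A.mulVec xc - b) := by
    simp [Matrix.mulVec_sub]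
  calc pnorm p (A.mulVec xhopt - A.mulVec xc)
      = pnorm p (A.mulVec (xhopt - xopt) + (A.mulVec xopt - b) + -(A.mulVec xc - b)) := by
        rw [e2]
    _ ≤ pnorm p (A.mulVec (xhopt - xopt) + (A.mulVec xopt - b))
        + pnorm p (-(A.mulVec xc - b)) := pnorm_add_le p hp _ _
    _ ≤ pnorm p (A.mulVec (xhopt - xopt)) + pnorm p (A.mulVec xopt - b)
        + pnorm p (A.mulVec xc - b) := by
        rw [pnorm_neg]
        exact add_le_add (pnorm_add_le p hp _ _) le_rfl
    _ ≤ 3 * Z + Z + 8 * Z := by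
        refine add_le_add (add_le_add h2 ?_) hxc
        rw [hZ]
    _ = 12 * Z := by ring
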